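/- arXiv:2009.13052 — 2 statements merged into one kernel-verified Lean document; each statement's English description precedes it below -/
import Mathlib

section
/- Let d : C → C be a nonzero Λ-linear map. Then both infima — the infimum of A(ȳ) − A(x̄) over all pairs of capped orbits x̄, ȳ with ⟨d x̄, ȳ⟩ = 1, and the infimum of A(d ξ) − A(ξ) over all ξ ∈ C with d ξ ≠ 0 — are attained, i.e. each of these two sets of real numbers has a minimum. -/
/-!  Common setup: `Λ := LaurentSeries (ZMod 2)`, `C := Fin n → Λ`, the action
functional `A`, orthogonality, capped orbits, the pairing `⟨d x̄, ȳ⟩`,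
Floer-type differentials and singular decompositions. -/

noncomputable section

/-- The Novikov field `Λ = 𝔽₂((q))`, realized as formal Laurent series over `ZMod 2`. -/
abbrev Lam : Type := LaurentSeries (ZMod 2)

open Classical in
/-- The action `A : C → ℝ ∪ {+∞}`: `A 0 = ⊤` and for `ξ ≠ 0`,
`A ξ = min { a i + λ₀ • ord (ξ i) | ξ i ≠ 0 }`. -/
def actA (n : ℕ) (lam0 : ℝ) (a : Fin n → ℝ) (xi : Fin n → Lam) : WithTop ℝ :=
  Finset.univ.inf fun i : Fin n =>
    if xi i = 0 then (⊤ : WithTop ℝ)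
    else ((a i + lam0 * ((xi i).order : ℝ) : ℝ) : WithTop ℝ)

/-- A finite family `(ξ j)` of vectors of `C` is orthogonal if
`A (∑ λ_j • ξ_j) = min_j A (λ_j • ξ_j)` for all coefficients `λ_j ∈ Λ`. -/
def IsOrthogonalFamily (n : ℕ) (lam0 : ℝ) (a : Fin n → ℝ) {ι : Type} [Fintype ι]
    (xi : ι → (Fin n → Lam)) : Prop :=
  ∀ c : ι → Lam,
    actA n lam0 a (∑ j, c j • xi j) = Finset.univ.inf fun j => actA n lam0 a (c j • xi j)

/-- The capped orbit `q^k eᵢ`. -/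
def cappedOrbit (n : ℕ) (i : Fin n) (k : ℤ) : Fin n → Lam :=
  Pi.single i (HahnSeries.single k 1)

/-- `⟨d x̄, ȳ⟩ ∈ 𝔽₂` for `x̄ = q^k eᵢ` and `ȳ = q^l eⱼ`: the `(l - k)`-th Laurent
coefficient of the `j`-th component of `d eᵢ`. -/
def pairing (n : ℕ) (d : (Fin n → Lam) →ₗ[Lam] (Fin n → Lam)) (i j : Fin n) (k l : ℤ) :
    ZMod 2 :=
  ((d (Pi.single i 1)) j).coeff (l - k)

/-- The set of arrow lengths `A ȳ - A x̄` over pairs of capped orbits with `⟨d x̄, ȳ⟩ = 1`. -/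
def arrowLengths (n : ℕ) (lam0 : ℝ) (a : Fin n → ℝ)
    (d : (Fin n → Lam) →ₗ[Lam] (Fin n → Lam)) : Set ℝ :=
  {t : ℝ | ∃ (i j : Fin n) (k l : ℤ),
    pairing n d i j k l = 1 ∧ t = (a j + lam0 * l) - (a i + lam0 * k)}

/-- The set of values `A (d ξ) - A ξ` over `ξ ∈ C` with `d ξ ≠ 0`. -/
def actionGaps (n : ℕ) (lam0 : ℝ) (a : Fin n → ℝ)
    (d : (Fin n → Lam) →ₗ[Lam] (Fin n → Lam)) : Set ℝ :=
  {t : ℝ | ∃ xi : Fin n → Lam, d xi ≠ 0 ∧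
    actA n lam0 a (d xi) = actA n lam0 a xi + (t : WithTop ℝ)}

/-- A Floer-type differential on `C`: a `Λ`-linear map squaring to zero that strictly
increases the action. -/
def IsFloerDifferential (n : ℕ) (lam0 : ℝ) (a : Fin n → ℝ)
    (d : (Fin n → Lam) →ₗ[Lam] (Fin n → Lam)) : Prop :=
  d ∘ₗ d = 0 ∧
    ∀ xi : Fin n → Lam, xi ≠ 0 → d xi ≠ 0 → actA n lam0 a xi < actA n lam0 a (d xi)

/-- A singular decomposition of `(C, d)`: `p + 2r = n` and an orthogonal basis
`α₁,…,α_p, η₁,…,η_r, γ₁,…,γ_r` of `C` over `Λ` with `d αᵢ = 0` and `d ηⱼ = γⱼ`. -/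
def IsSingularDecomposition (n : ℕ) (lam0 : ℝ) (a : Fin n → ℝ)
    (d : (Fin n → Lam) →ₗ[Lam] (Fin n → Lam)) (p r : ℕ)
    (alpha : Fin p → (Fin n → Lam)) (eta gamma : Fin r → (Fin n → Lam)) : Prop :=
  p + 2 * r = n ∧
  IsOrthogonalFamily n lam0 a (Sum.elim alpha (Sum.elim eta gamma)) ∧
  LinearIndependent Lam (Sum.elim alpha (Sum.elim eta gamma)) ∧
  Submodule.span Lam (Set.range (Sum.elim alpha (Sum.elim eta gamma))) = ⊤ ∧
  (∀ i, d (alpha i) = 0) ∧ (∀ j, d (eta j) = gamma j)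

/-- The set of bars `A (γ j) - A (η j)` of a singular decomposition; its infimum is the
minimal bar `β_min` when `r ≥ 1`. -/
def barSet (n : ℕ) (lam0 : ℝ) (a : Fin n → ℝ) {r : ℕ}
    (eta gamma : Fin r → (Fin n → Lam)) : Set ℝ :=
  {t : ℝ | ∃ j : Fin r, actA n lam0 a (gamma j) = actA n lam0 a (eta j) + (t : WithTop ℝ)}

end

section AuxProof

variable (n : ℕ) (lam0 : ℝ) (a : Fin n → ℝ)

private lemma actA_le_of_ne (xi : Fin n → Lam) (i : Fin n) (h : xi i ≠ 0) :
    actA n lam0 a xi ≤ ((a i + lam0 * ((xi i).order : ℝ) : ℝ) : WithTop ℝ) := by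
  refine le_trans (Finset.inf_le (Finset.mem_univ i)) ?_
  classical
  simp [actA, h]

private lemma le_actA (xi : Fin n → Lam) (c : WithTop ℝ)
    (h : ∀ i, xi i ≠ 0 → c ≤ ((a i + lam0 * ((xi i).order : ℝ) : ℝ) : WithTop ℝ)) :
    c ≤ actA n lam0 a xi := by
  refine Finset.le_inf fun i _ => ?_
  by_cases hi : xi i = 0
  · simp [hi]
  · simpa [hi] using h i hi

private lemma zmod2_eq_one {x : ZMod 2} (h : x ≠ 0) : x = 1 := by revert x; decide

private lemma actA_single (i : Fin n) :
    actA n lam0 a (Pi.single i (1 : Lam)) = ((a i : ℝ) : WithTop ℝ) := by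
  apply le_antisymm
  · have h1 : (Pi.single i (1 : Lam) : Fin n → Lam) i ≠ 0 := by simp
    refine le_trans (actA_le_of_ne n lam0 a _ i h1) ?_
    simp [HahnSeries.order_one]
  · refine le_actA n lam0 a _ _ fun i' hi' => ?_
    have : i' = i := by
      by_contra hne
      exact hi' (Pi.single_eq_of_ne hne 1)
    subst this
    simp [HahnSeries.order_one]

private lemma d_apply_eq_sum (d : (Fin n → Lam) →ₗ[Lam] (Fin n → Lam))
    (xi : Fin n → Lam) (j : Fin n) :
    (d xi) j = ∑ i, xi i * (d (Pi.single i 1)) j := by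
  have hxi : xi = ∑ i, (xi i) • (Pi.single i (1 : Lam) : Fin n → Lam) := by
    conv_lhs => rw [← Finset.univ_sum_single xi]
    refine Finset.sum_congr rfl fun i _ => ?_
    ext j'
    by_cases h : j' = i <;> simp [Pi.single_apply, h]
  conv_lhs => rw [hxi, map_sum]
  simp [Finset.sum_apply, smul_eq_mul]

end AuxProof

/-- For a nonzero `Λ`-linear map `d : C → C`, both infima — that of
`A ȳ - A x̄` over pairs of capped orbits with `⟨d x̄, ȳ⟩ = 1`, and that of
`A (d ξ) - A ξ` over `ξ` with `d ξ ≠ 0` — are attained. -/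


theorem arrowLengths_actionGaps_attained (n : ℕ) (lam0 : ℝ) (hlam0 : 0 < lam0)
    (a : Fin n → ℝ) (d : (Fin n → Lam) →ₗ[Lam] (Fin n → Lam)) (hd : d ≠ 0) :
    (∃ m : ℝ, IsLeast (arrowLengths n lam0 a d) m) ∧
    (∃ m : ℝ, IsLeast (actionGaps n lam0 a d) m) := by
  classical
  set g : Fin n → Fin n → Lam := fun i j => (d (Pi.single i 1)) j with hg
  set T : Finset (Fin n × Fin n) := Finset.univ.filter (fun p => g p.1 p.2 ≠ 0) with hTdef
  have hmemT : ∀ p : Fin n × Fin n, p ∈ T ↔ g p.1 p.2 ≠ 0 := by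
    intro p; simp [hTdef]
  have hT : T.Nonempty := by
    rw [Finset.nonempty_iff_ne_empty]
    intro hemp
    apply hd
    have hg0 : ∀ i j, g i j = 0 := by
      intro i j
      by_contra hij
      have : (i, j) ∈ T := (hmemT (i, j)).mpr hij
      simp [hemp] at this
    refine LinearMap.ext fun xi => ?_
    funext j
    rw [LinearMap.zero_apply, d_apply_eq_sum n d xi j]
    simp only [Pi.zero_apply]
    refine Finset.sum_eq_zero fun i _ => ?_
    rw [show (d (Pi.single i 1)) j = g i j from rfl, hg0 i j, mul_zero]
  set F : Fin n × Fin n → ℝ :=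
    fun p => (a p.2 - a p.1) + lam0 * (((g p.1 p.2).order : ℤ) : ℝ) with hF
  obtain ⟨p0, hp0T, hp0min⟩ := T.exists_min_image F hT
  set m := F p0 with hm
  have hgp0 : g p0.1 p0.2 ≠ 0 := (hmemT p0).mp hp0T
  -- the key lower bound on arrow lengths
  have harrow_lb : ∀ t ∈ arrowLengths n lam0 a d, m ≤ t := by
    rintro t ⟨i, j, k, l, hpair, rfl⟩
    have hco : (g i j).coeff (l - k) ≠ 0 := by
      rw [show (g i j).coeff (l - k) = pairing n d i j k l from rfl, hpair]
      decide
    have hgij : g i j ≠ 0 := by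
      intro h0; rw [h0] at hco; simp at hco
    have hord : (g i j).order ≤ l - k := HahnSeries.order_le_of_coeff_ne_zero hco
    have hFle : F p0 ≤ F (i, j) := hp0min (i, j) ((hmemT (i, j)).mpr hgij)
    have h1 : lam0 * (((g i j).order : ℤ) : ℝ) ≤ lam0 * ((l - k : ℤ) : ℝ) := by
      apply mul_le_mul_of_nonneg_left _ hlam0.le
      exact_mod_cast hord
    have h2 : ((l - k : ℤ) : ℝ) = (l : ℝ) - (k : ℝ) := by push_cast; ring
    rw [h2] at h1
    simp only [hF] at hFle
    rw [hm, hF]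
    simp only at hFle h1 ⊢
    linarith
  -- m is an arrow length
  have harrow_mem : m ∈ arrowLengths n lam0 a d := by
    refine ⟨p0.1, p0.2, 0, (g p0.1 p0.2).order, ?_, ?_⟩
    · have : (g p0.1 p0.2).coeff ((g p0.1 p0.2).order - 0) ≠ 0 := by
        rw [sub_zero]; exact HahnSeries.coeff_order_eq_zero.not.mpr hgp0
      exact zmod2_eq_one this
    · rw [hm, hF]; push_cast; ring
  -- key estimate: actA ξ + m ≤ actA (d ξ)
  have hkey : ∀ xi : Fin n → Lam, actA n lam0 a xi + (m : WithTop ℝ) ≤ actA n lam0 a (d xi) := by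
    intro xi
    refine le_actA n lam0 a _ _ fun j hj => ?_
    set l := ((d xi) j).order with hl
    have hco : ((d xi) j).coeff l ≠ 0 := HahnSeries.coeff_order_eq_zero.not.mpr hj
    rw [d_apply_eq_sum n d xi j] at hco
    rw [show (∑ i, xi i * (d (Pi.single i 1)) j).coeff l
        = ∑ i, (xi i * (d (Pi.single i 1)) j).coeff l from
        map_sum (HahnSeries.coeff.addMonoidHom l) _ _] at hco
    obtain ⟨i, _, hi⟩ := Finset.exists_ne_zero_of_sum_ne_zero hco
    have hi' : (xi i * g i j).coeff l ≠ 0 := hi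
    rw [HahnSeries.coeff_mul] at hi'
    obtain ⟨km, hkm_mem, hkm⟩ := Finset.exists_ne_zero_of_sum_ne_zero hi'
    obtain ⟨_, _, hsum⟩ := Finset.mem_addAntidiagonal.mp hkm_mem
    have hxik : (xi i).coeff km.1 ≠ 0 := fun h => hkm (by rw [h, zero_mul])
    have hgk : (g i j).coeff km.2 ≠ 0 := fun h => hkm (by rw [h, mul_zero])
    have hxi0 : xi i ≠ 0 := fun h => hxik (by rw [h]; simp)
    have hgij : g i j ≠ 0 := fun h => hgk (by rw [h]; simp)
    have hordx : (xi i).order ≤ km.1 := HahnSeries.order_le_of_coeff_ne_zero hxik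
    have hordg : (g i j).order ≤ km.2 := HahnSeries.order_le_of_coeff_ne_zero hgk
    have hFle : F p0 ≤ F (i, j) := hp0min (i, j) ((hmemT (i, j)).mpr hgij)
    have hA : actA n lam0 a xi ≤ ((a i + lam0 * (((xi i).order : ℤ) : ℝ) : ℝ) : WithTop ℝ) :=
      actA_le_of_ne n lam0 a xi i hxi0
    calc actA n lam0 a xi + (m : WithTop ℝ)
        ≤ ((a i + lam0 * (((xi i).order : ℤ) : ℝ) : ℝ) : WithTop ℝ) + (m : WithTop ℝ) := by
          exact add_le_add_left hA _
      _ = (((a i + lam0 * (((xi i).order : ℤ) : ℝ)) + m : ℝ) : WithTop ℝ) := by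
          rw [← WithTop.coe_add]
      _ ≤ ((a j + lam0 * ((l : ℤ) : ℝ) : ℝ) : WithTop ℝ) := by
          rw [WithTop.coe_le_coe]
          simp only [hF] at hFle
          have h1 : lam0 * (((xi i).order : ℤ) : ℝ) ≤ lam0 * ((km.1 : ℤ) : ℝ) := by
            apply mul_le_mul_of_nonneg_left _ hlam0.le
            exact_mod_cast hordx
          have h2 : lam0 * (((g i j).order : ℤ) : ℝ) ≤ lam0 * ((km.2 : ℤ) : ℝ) := by
            apply mul_le_mul_of_nonneg_left _ hlam0.le
            exact_mod_cast hordg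
          have h3 : ((km.1 : ℤ) : ℝ) + ((km.2 : ℤ) : ℝ) = ((l : ℤ) : ℝ) := by
            rw [← hsum]; push_cast; ring
          have hFp0 : F p0 = a p0.2 - a p0.1 + lam0 * (((g p0.1 p0.2).order : ℤ) : ℝ) := rfl
          have h4 : lam0 * ((km.1 : ℤ) : ℝ) + lam0 * ((km.2 : ℤ) : ℝ)
              = lam0 * ((l : ℤ) : ℝ) := by rw [← mul_add, h3]
          rw [hm]
          linarith [hFp0, h4]
  -- gap lower bound
  have hgap_lb : ∀ t ∈ actionGaps n lam0 a d, m ≤ t := by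
    rintro t ⟨xi, hxi, heq⟩
    have hxi0 : xi ≠ 0 := fun h => hxi (by rw [h, map_zero])
    obtain ⟨i0, hi0⟩ := Function.ne_iff.mp hxi0
    obtain ⟨j0, hj0⟩ := Function.ne_iff.mp hxi
    have hAx : actA n lam0 a xi ≠ ⊤ := by
      intro h
      have := actA_le_of_ne n lam0 a xi i0 (by simpa using hi0)
      rw [h] at this
      exact WithTop.coe_ne_top (top_le_iff.mp this)
    obtain ⟨x, hx⟩ := Option.ne_none_iff_exists'.mp hAx
    have := hkey xi
    rw [heq, hx] at this
    have h2 : ((x + m : ℝ) : WithTop ℝ) ≤ ((x + t : ℝ) : WithTop ℝ) := by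
      rw [WithTop.coe_add, WithTop.coe_add]; exact this
    have := WithTop.coe_le_coe.mp h2
    linarith
  -- gap membership
  have hgap_mem : m ∈ actionGaps n lam0 a d := by
    refine ⟨Pi.single p0.1 1, ?_, ?_⟩
    · intro h0
      exact hgp0 (show (d (Pi.single p0.1 1)) p0.2 = (0 : Lam) by rw [h0]; rfl)
    · have h1 : actA n lam0 a (Pi.single p0.1 (1 : Lam)) = ((a p0.1 : ℝ) : WithTop ℝ) :=
        actA_single n lam0 a p0.1
      have h2 : actA n lam0 a (d (Pi.single p0.1 1)) = ((a p0.1 + m : ℝ) : WithTop ℝ) := by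
        apply le_antisymm
        · have hne : (d (Pi.single p0.1 1)) p0.2 ≠ 0 := hgp0
          refine le_trans (actA_le_of_ne n lam0 a _ p0.2 hne) ?_
          rw [WithTop.coe_le_coe]
          rw [hm, hF]
          simp only
          rw [show ((d (Pi.single p0.1 1)) p0.2) = g p0.1 p0.2 from rfl]
          linarith
        · have := hkey (Pi.single p0.1 1)
          rw [h1, ← WithTop.coe_add] at this
          exact this
      rw [h1, h2, ← WithTop.coe_add]
  exact ⟨⟨m, harrow_mem, harrow_lb⟩, ⟨m, hgap_mem, hgap_lb⟩⟩
end

section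
/- Let d be a nonzero Floer-type differential on C. If (α_1,…,α_p, η_1,…,η_r, γ_1,…,γ_r) and (α'_1,…,α'_{p'}, η'_1,…,η'_{r'}, γ'_1,…,γ'_{r'}) are two singular decompositions of (C, d), then r ≥ 1, r' ≥ 1, and their minimal bars coincide: min_{1≤j≤r} (A(γ_j) − A(η_j)) = min_{1≤j≤r'} (A(γ'_j) − A(η'_j)). -/
noncomputable section AuxMinBar

open Classical

lemma actA_eq_top_iff' (n : ℕ) (lam0 : ℝ) (a : Fin n → ℝ) (xi : Fin n → Lam) :
    actA n lam0 a xi = ⊤ ↔ xi = 0 := by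
  unfold actA
  rw [Finset.inf_eq_top_iff]
  constructor
  · intro h
    funext i
    have hi := h i (Finset.mem_univ i)
    by_contra hne
    rw [Pi.zero_apply] at hne
    rw [if_neg hne] at hi
    exact WithTop.coe_ne_top hi
  · intro h i _
    have : xi i = 0 := by rw [h]; rfl
    simp [this]

lemma inf_const_add' {ι : Type} (s : Finset ι) (k : ℝ) (g : ι → WithTop ℝ) :
    s.inf (fun i => (k : WithTop ℝ) + g i) = (k : WithTop ℝ) + s.inf g := by
  induction s using Finset.induction with
  | empty => simp
  | insert _ _ h ih =>
    rw [Finset.inf_insert, Finset.inf_insert, ih]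
    exact min_add_add_left (α := WithTop ℝ) _ _ _

lemma actA_smul' (n : ℕ) (lam0 : ℝ) (a : Fin n → ℝ) (c : Lam) (hc : c ≠ 0)
    (xi : Fin n → Lam) :
    actA n lam0 a (c • xi)
      = ((lam0 * (c.order : ℝ) : ℝ) : WithTop ℝ) + actA n lam0 a xi := by
  unfold actA
  rw [← inf_const_add']
  refine Finset.inf_congr rfl ?_
  intro i _
  by_cases h : xi i = 0
  · simp [h]
  · have hne : (c • xi) i ≠ 0 := by
      simp only [Pi.smul_apply, smul_eq_mul]
      exact mul_ne_zero hc h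
    rw [if_neg hne, if_neg h, ← WithTop.coe_add, WithTop.coe_inj]
    have : ((c • xi) i).order = c.order + (xi i).order := by
      simp only [Pi.smul_apply, smul_eq_mul]
      exact HahnSeries.order_mul hc h
    rw [this]
    push_cast
    ring


lemma rpos_of_ne_zero {n : ℕ} {lam0 : ℝ} {a : Fin n → ℝ}
    {d : (Fin n → Lam) →ₗ[Lam] (Fin n → Lam)} (hd : d ≠ 0)
    {p r : ℕ} {alpha : Fin p → (Fin n → Lam)} {eta gamma : Fin r → (Fin n → Lam)}
    (hdec : IsSingularDecomposition n lam0 a d p r alpha eta gamma) : 1 ≤ r := by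
  by_contra hr
  push_neg at hr
  have hr0 : r = 0 := by omega
  subst hr0
  obtain ⟨-, -, -, hspan, halpha, -⟩ := hdec
  apply hd
  have hsub : Set.range (Sum.elim alpha (Sum.elim eta gamma))
      ⊆ (LinearMap.ker d : Set (Fin n → Lam)) := by
    rintro _ ⟨idx, rfl⟩
    rcases idx with i | j | j
    · simpa [LinearMap.mem_ker] using halpha i
    · exact Fin.elim0 j
    · exact Fin.elim0 j
  have htop : (⊤ : Submodule Lam (Fin n → Lam)) ≤ LinearMap.ker d := by
    rw [← hspan]; exact Submodule.span_le.mpr hsub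
  exact LinearMap.ker_eq_top.mp (top_unique htop)

lemma exists_bar_le {n : ℕ} {lam0 : ℝ} {a : Fin n → ℝ}
    {d : (Fin n → Lam) →ₗ[Lam] (Fin n → Lam)} (hdd : d ∘ₗ d = 0)
    {p r : ℕ} {alpha : Fin p → (Fin n → Lam)} {eta gamma : Fin r → (Fin n → Lam)}
    (horth : IsOrthogonalFamily n lam0 a (Sum.elim alpha (Sum.elim eta gamma)))
    (hspan : Submodule.span Lam (Set.range (Sum.elim alpha (Sum.elim eta gamma))) = ⊤)
    (hli : LinearIndependent Lam (Sum.elim alpha (Sum.elim eta gamma)))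
    (halpha : ∀ i, d (alpha i) = 0) (heta : ∀ j, d (eta j) = gamma j)
    {t : ℝ} {xi : Fin n → Lam} (hdxi : d xi ≠ 0)
    (hgap : actA n lam0 a (d xi) = actA n lam0 a xi + (t : WithTop ℝ)) :
    ∃ s ∈ barSet n lam0 a eta gamma, s ≤ t := by
  set v := Sum.elim alpha (Sum.elim eta gamma) with hv
  have hxi0 : xi ≠ 0 := by rintro rfl; simp at hdxi
  have hxmem : xi ∈ Submodule.span Lam (Set.range v) := by rw [hspan]; trivial
  obtain ⟨c, hc⟩ := (Submodule.mem_span_range_iff_exists_fun Lam).mp hxmem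
  have hdγ : ∀ j, d (gamma j) = 0 := fun j => by
    rw [← heta j, ← LinearMap.comp_apply, hdd, LinearMap.zero_apply]
  have hdsum : d xi = ∑ j : Fin r, c (Sum.inr (Sum.inl j)) • gamma j := by
    rw [← hc, map_sum]
    simp only [map_smul]
    simp [hv, Fintype.sum_sum_type, halpha, heta, hdγ]
  have hne : ∃ j : Fin r, c (Sum.inr (Sum.inl j)) • gamma j ≠ 0 := by
    by_contra h
    push_neg at h
    exact hdxi (by rw [hdsum]; exact Finset.sum_eq_zero fun j _ => h j)
  obtain ⟨j0, hj0⟩ := hne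
  haveI : Nonempty (Fin p ⊕ (Fin r ⊕ Fin r)) := ⟨Sum.inr (Sum.inl j0)⟩
  have zsm : ∀ w : Fin n → Lam, (0 : Lam) • w = 0 := fun w => zero_smul Lam w
  set c' : Fin p ⊕ (Fin r ⊕ Fin r) → Lam :=
    Sum.elim (fun _ => (0:Lam)) (Sum.elim (fun _ => (0:Lam)) (fun j => c (Sum.inr (Sum.inl j)))) with hc'
  have hsum' : ∑ k, c' k • v k = d xi := by
    rw [hdsum]
    simp [hc', hv, Fintype.sum_sum_type, zsm]
  have hAd : actA n lam0 a (d xi)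
      = Finset.univ.inf (fun k => actA n lam0 a (c' k • v k)) := by
    rw [← hsum']; exact horth c'
  obtain ⟨k0, -, hk0⟩ := Finset.exists_mem_eq_inf (Finset.univ)
    Finset.univ_nonempty (fun k => actA n lam0 a (c' k • v k))
  have hAdne : actA n lam0 a (d xi) ≠ ⊤ := fun h => hdxi ((actA_eq_top_iff' _ _ _ _).mp h)
  have hk0ne : c' k0 • v k0 ≠ 0 := by
    intro h
    apply hAdne
    rw [hAd, hk0, h]
    exact (actA_eq_top_iff' _ _ _ _).mpr rfl
  rcases k0 with i | j | j
  · exact absurd (by simp [hc', zsm]) hk0ne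
  · exact absurd (by simp [hc', zsm]) hk0ne
  have huj : c (Sum.inr (Sum.inl j)) ≠ 0 := by
    intro h
    exact hk0ne (by simp [hc', h, zsm])
  have hγ : gamma j ≠ 0 := by
    intro h
    exact hk0ne (by simp [hc', hv, h])
  have hη : eta j ≠ 0 := by
    simpa [hv] using hli.ne_zero (Sum.inr (Sum.inl j))
  obtain ⟨g, hg⟩ := WithTop.ne_top_iff_exists.mp
    (fun h => hγ ((actA_eq_top_iff' _ _ _ _).mp h) :
      actA n lam0 a (gamma j) ≠ ⊤)
  obtain ⟨y, hy⟩ := WithTop.ne_top_iff_exists.mp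
    (fun h => hη ((actA_eq_top_iff' _ _ _ _).mp h) :
      actA n lam0 a (eta j) ≠ ⊤)
  obtain ⟨x, hx⟩ := WithTop.ne_top_iff_exists.mp
    (fun h => hxi0 ((actA_eq_top_iff' _ _ _ _).mp h) :
      actA n lam0 a xi ≠ ⊤)
  set kk : ℝ := lam0 * (((c (Sum.inr (Sum.inl j))).order : ℤ) : ℝ) with hkk
  have e1 : actA n lam0 a (d xi) = ((kk + g : ℝ) : WithTop ℝ) := by
    rw [hAd, hk0]
    show actA n lam0 a (c (Sum.inr (Sum.inl j)) • gamma j) = _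
    rw [actA_smul' n lam0 a _ huj, ← hg, ← WithTop.coe_add]
  have e2 : actA n lam0 a xi ≤ ((kk + y : ℝ) : WithTop ℝ) := by
    have h2 := horth c
    rw [hc] at h2
    calc actA n lam0 a xi
        = Finset.univ.inf (fun k => actA n lam0 a (c k • v k)) := h2
      _ ≤ actA n lam0 a (c (Sum.inr (Sum.inl j)) • v (Sum.inr (Sum.inl j))) :=
          Finset.inf_le (Finset.mem_univ _)
      _ = ((kk + y : ℝ) : WithTop ℝ) := by
          show actA n lam0 a (c (Sum.inr (Sum.inl j)) • eta j) = _
          rw [actA_smul' n lam0 a _ huj, ← hy, ← WithTop.coe_add]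
  rw [← hx] at hgap e2
  rw [e1, ← WithTop.coe_add, WithTop.coe_inj] at hgap
  rw [WithTop.coe_le_coe] at e2
  refine ⟨g - y, ⟨j, ?_⟩, ?_⟩
  · rw [← hg, ← hy, ← WithTop.coe_add, WithTop.coe_inj]
    ring
  · linarith

lemma sInf_barSet_eq_actionGaps {n : ℕ} {lam0 : ℝ} {a : Fin n → ℝ}
    {d : (Fin n → Lam) →ₗ[Lam] (Fin n → Lam)} (hd : d ≠ 0) (hdd : d ∘ₗ d = 0)
    {p r : ℕ} {alpha : Fin p → (Fin n → Lam)} {eta gamma : Fin r → (Fin n → Lam)}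
    (hdec : IsSingularDecomposition n lam0 a d p r alpha eta gamma) :
    sInf (barSet n lam0 a eta gamma) = sInf (actionGaps n lam0 a d) := by
  have hr : 1 ≤ r := rpos_of_ne_zero hd hdec
  obtain ⟨-, horth, hli, hspan, halpha, heta⟩ := hdec
  have hηne : ∀ j, eta j ≠ 0 := fun j => by
    simpa using hli.ne_zero (Sum.inr (Sum.inl j))
  have hγne : ∀ j, gamma j ≠ 0 := fun j => by
    simpa using hli.ne_zero (Sum.inr (Sum.inr j))
  have hsub : barSet n lam0 a eta gamma ⊆ actionGaps n lam0 a d := by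
    rintro t ⟨j, hj⟩
    exact ⟨eta j, by rw [heta j]; exact hγne j, by rw [heta j]; exact hj⟩
  have hbar : ∀ j : Fin r, ∃ t : ℝ,
      actA n lam0 a (gamma j) = actA n lam0 a (eta j) + (t : WithTop ℝ) := by
    intro j
    obtain ⟨g, hg⟩ := WithTop.ne_top_iff_exists.mp
      (fun h => hγne j ((actA_eq_top_iff' _ _ _ _).mp h) :
        actA n lam0 a (gamma j) ≠ ⊤)
    obtain ⟨y, hy⟩ := WithTop.ne_top_iff_exists.mp
      (fun h => hηne j ((actA_eq_top_iff' _ _ _ _).mp h) :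
        actA n lam0 a (eta j) ≠ ⊤)
    exact ⟨g - y, by rw [← hg, ← hy, ← WithTop.coe_add, WithTop.coe_inj]; ring⟩
  have hbne : (barSet n lam0 a eta gamma).Nonempty := by
    obtain ⟨t, ht⟩ := hbar ⟨0, hr⟩
    exact ⟨t, ⟨0, hr⟩, ht⟩
  have hbfin : (barSet n lam0 a eta gamma).Finite := by
    apply Set.Finite.subset (Set.finite_range fun j : Fin r =>
      ((actA n lam0 a (gamma j)).untopD 0) - ((actA n lam0 a (eta j)).untopD 0))
    rintro t ⟨j, hj⟩
    obtain ⟨y, hy⟩ := WithTop.ne_top_iff_exists.mp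
      (fun h => hηne j ((actA_eq_top_iff' _ _ _ _).mp h) :
        actA n lam0 a (eta j) ≠ ⊤)
    refine ⟨j, ?_⟩
    simp only [hj, ← hy, ← WithTop.coe_add, WithTop.untopD_coe]
    ring
  have hbdd : BddBelow (barSet n lam0 a eta gamma) := hbfin.bddBelow
  have hlb : ∀ t ∈ actionGaps n lam0 a d, sInf (barSet n lam0 a eta gamma) ≤ t := by
    rintro t ⟨xi, hdxi, hgap⟩
    obtain ⟨s, hs, hst⟩ := exists_bar_le hdd horth hspan hli halpha heta hdxi hgap
    exact le_trans (csInf_le hbdd hs) hst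
  have hane : (actionGaps n lam0 a d).Nonempty := hbne.mono hsub
  have habdd : BddBelow (actionGaps n lam0 a d) :=
    ⟨sInf (barSet n lam0 a eta gamma), hlb⟩
  refine le_antisymm (le_csInf hane hlb) (csInf_le habdd (hsub (hbne.csInf_mem hbfin)))

end AuxMinBar

/-- For a nonzero Floer-type differential `d` on `C`, any two singular
decompositions of `(C, d)` have `r ≥ 1`, `r' ≥ 1` and equal minimal bars. -/
theorem minimalBar_wellDefined (n : ℕ) (lam0 : ℝ) (hlam0 : 0 < lam0) (a : Fin n → ℝ)
    (d : (Fin n → Lam) →ₗ[Lam] (Fin n → Lam)) (hd : d ≠ 0)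
    (hFloer : IsFloerDifferential n lam0 a d)
    (p r : ℕ) (alpha : Fin p → (Fin n → Lam)) (eta gamma : Fin r → (Fin n → Lam))
    (hdec : IsSingularDecomposition n lam0 a d p r alpha eta gamma)
    (p' r' : ℕ) (alpha' : Fin p' → (Fin n → Lam)) (eta' gamma' : Fin r' → (Fin n → Lam))
    (hdec' : IsSingularDecomposition n lam0 a d p' r' alpha' eta' gamma') :
    1 ≤ r ∧ 1 ≤ r' ∧
      sInf (barSet n lam0 a eta gamma) = sInf (barSet n lam0 a eta' gamma') := by
  refine ⟨rpos_of_ne_zero hd hdec, rpos_of_ne_zero hd hdec', ?_⟩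
  rw [sInf_barSet_eq_actionGaps hd hFloer.1 hdec,
    sInf_barSet_eq_actionGaps hd hFloer.1 hdec']
end
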